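/- Transfer of calibration from fixed sample sizes to stopping times: let P0, P1 be probability measures on (Ω, F), τ an a.s.-finite stopping time, and (B_n) an adapted sequence of positive random variables with stopped variable B_τ = Σ_n 1[τ=n] B_n. If for some constant c > 0 and every n with P0(τ=n) > 0 one has, for μ^{P0,B_n}-almost all b, (P1(τ=n)/P0(τ=n)) · (dμ^{P1,B_n|τ=n}/dμ^{P0,B_n|τ=n})(b) = c·b, then for μ^{P0,B_τ}-almost all b, (dμ^{P1,B_τ}/dμ^{P0,B_τ})(b) = c·b. -/

import Mathlib

open MeasureTheory ProbabilityTheory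
open scoped ENNReal

/-- Transfer of calibration from fixed sample sizes to stopping times (Lemma 1):
if for every `n` with `P0(τ = n) > 0` the fixed-sample-size calibration property
`(P1(τ=n)/P0(τ=n)) · (dμ^{P1,B_n|τ=n}/dμ^{P0,B_n|τ=n})(b) = c·b` holds
`μ^{P0,B_n}`-a.e., then `(dμ^{P1,B_τ}/dμ^{P0,B_τ})(b) = c·b` holds `μ^{P0,B_τ}`-a.e. -/
theorem calibration_transfer_to_stopping_time
    {Ω : Type*} [MeasurableSpace Ω]
    (P0 P1 : Measure Ω) [IsProbabilityMeasure P0] [IsProbabilityMeasure P1]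
    (τ : Ω → ℕ) (hτ : Measurable τ)
    (B : ℕ → Ω → ℝ≥0∞) (hBmeas : ∀ n, Measurable (B n)) (hBpos : ∀ n ω, 0 < B n ω)
    (c : ℝ≥0∞) (hc : 0 < c)
    (hac : ∀ n, Measure.map (B n) (P1[|{ω | τ ω = n}]) ≪
      Measure.map (B n) (P0[|{ω | τ ω = n}]))
    (hac' : ∀ n, Measure.map (B n) (P0[|{ω | τ ω = n}]) ≪
      Measure.map (B n) (P1[|{ω | τ ω = n}]))
    (hacτ : Measure.map (fun ω => B (τ ω) ω) P1 ≪ Measure.map (fun ω => B (τ ω) ω) P0)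
    (hfix : ∀ n, P0 {ω | τ ω = n} ≠ 0 →
      ∀ᵐ b ∂(Measure.map (B n) P0),
        (P1 {ω | τ ω = n} / P0 {ω | τ ω = n}) *
          (Measure.map (B n) (P1[|{ω | τ ω = n}])).rnDeriv
            (Measure.map (B n) (P0[|{ω | τ ω = n}])) b = c * b) :
    ∀ᵐ b ∂(Measure.map (fun ω => B (τ ω) ω) P0),
      (Measure.map (fun ω => B (τ ω) ω) P1).rnDeriv
        (Measure.map (fun ω => B (τ ω) ω) P0) b = c * b := by
  set f : Ω → ℝ≥0∞ := fun ω => B (τ ω) ω with hf_def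
  have hf : Measurable f := by
    have h : Measurable (fun p : Ω × ℕ => B p.2 p.1) :=
      measurable_from_prod_countable_left fun n => hBmeas n
    exact h.comp (measurable_id.prodMk hτ)
  have hAmeas : ∀ n : ℕ, MeasurableSet {ω | τ ω = n} := fun n =>
    hτ (measurableSet_singleton n)
  -- decomposition of the pushforward of the stopped variable as a sum over fibers
  have hsum : ∀ (P : Measure Ω),
      Measure.sum (fun n => Measure.map (B n) (P.restrict {ω | τ ω = n}))
        = Measure.map f P := by
    intro P
    ext s hs
    rw [Measure.sum_apply _ hs, Measure.map_apply hf hs]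
    have hpiece : ∀ n, Measure.map (B n) (P.restrict {ω | τ ω = n}) s
        = P (f ⁻¹' s ∩ {ω | τ ω = n}) := by
      intro n
      rw [Measure.map_apply (hBmeas n) hs, Measure.restrict_apply ((hBmeas n) hs)]
      congr 1
      ext ω
      simp only [Set.mem_inter_iff, Set.mem_preimage, Set.mem_setOf_eq]
      constructor
      · rintro ⟨h1, h2⟩
        refine ⟨?_, h2⟩
        simpa [hf_def, h2] using h1
      · rintro ⟨h1, h2⟩
        refine ⟨?_, h2⟩
        simpa [hf_def, h2] using h1
    simp_rw [hpiece]
    rw [← measure_iUnion ?_ (fun n => (hf hs).inter (hAmeas n))]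
    · congr 1
      ext ω
      simp
    · intro i j hij
      simp only [Function.onFun, Set.disjoint_left]
      rintro ω ⟨-, h1⟩ ⟨-, h2⟩
      exact hij (h1.symm.trans h2)
  -- the key per-fiber identity
  have key : ∀ n, Measure.map (B n) (P1.restrict {ω | τ ω = n})
      = (Measure.map (B n) (P0.restrict {ω | τ ω = n})).withDensity (fun x => c * x) := by
    intro n
    by_cases h0 : P0 {ω | τ ω = n} = 0
    · have hr0 : P0.restrict {ω | τ ω = n} = 0 := Measure.restrict_eq_zero.mpr h0
      have hcond0 : Measure.map (B n) (P0[|{ω | τ ω = n}]) = 0 := by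
        rw [ProbabilityTheory.cond, hr0]
        simp
      have h1map : Measure.map (B n) (P1[|{ω | τ ω = n}]) = 0 :=
        Measure.absolutelyContinuous_zero_iff.mp (hcond0 ▸ hac n)
      have h1 : P1 {ω | τ ω = n} = 0 := by
        by_contra h1ne
        haveI := cond_isProbabilityMeasure (μ := P1) (s := {ω | τ ω = n}) h1ne
        haveI : IsProbabilityMeasure (Measure.map (B n) (P1[|{ω | τ ω = n}])) :=
          Measure.isProbabilityMeasure_map (hBmeas n).aemeasurable
        have := measure_univ (μ := Measure.map (B n) (P1[|{ω | τ ω = n}]))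
        rw [h1map] at this
        simp at this
      rw [hr0, Measure.restrict_eq_zero.mpr h1]
      simp
    · set A := {ω | τ ω = n} with hA_def
      have haT : P0 A ≠ ∞ := measure_ne_top _ _
      -- P1 A ≠ 0
      have hb1 : P1 A ≠ 0 := by
        intro hb0
        have hfx := hfix n h0
        rw [hb0] at hfx
        simp only [ENNReal.zero_div, zero_mul] at hfx
        rw [Filter.eventually_iff, mem_ae_iff] at hfx
        have hms : MeasurableSet {x : ℝ≥0∞ | 0 = c * x}ᶜ := by
          have hset : {x : ℝ≥0∞ | 0 = c * x} = (fun x => c * x) ⁻¹' {0} := by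
            ext x; simp [eq_comm]
          rw [hset]
          exact ((measurable_const.mul measurable_id) (measurableSet_singleton 0)).compl
        rw [Measure.map_apply (hBmeas n) hms] at hfx
        have : (B n) ⁻¹' {x : ℝ≥0∞ | 0 = c * x}ᶜ = Set.univ := by
          ext ω
          simp only [Set.mem_preimage, Set.mem_compl_iff, Set.mem_setOf_eq, Set.mem_univ,
            iff_true]
          exact fun h => (mul_ne_zero hc.ne' (hBpos n ω).ne') h.symm
        rw [this, measure_univ] at hfx
        exact one_ne_zero hfx
      have hb1T : P1 A ≠ ∞ := measure_ne_top _ _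
      haveI := cond_isProbabilityMeasure (μ := P0) (s := A) h0
      haveI := cond_isProbabilityMeasure (μ := P1) (s := A) hb1
      set ν0 := Measure.map (B n) (P0[|A]) with hν0_def
      set ν1 := Measure.map (B n) (P1[|A]) with hν1_def
      haveI : IsProbabilityMeasure ν0 := Measure.isProbabilityMeasure_map (hBmeas n).aemeasurable
      haveI : IsProbabilityMeasure ν1 := Measure.isProbabilityMeasure_map (hBmeas n).aemeasurable
      set r := ν1.rnDeriv ν0 with hr_def
      have hr : Measurable r := Measure.measurable_rnDeriv _ _
      have hwd : ν1 = ν0.withDensity r :=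
        (Measure.withDensity_rnDeriv_eq ν1 ν0 (hac n)).symm
      -- restrict = (measure of A) • cond
      have hrest : ∀ (P : Measure Ω), P A ≠ 0 → P A ≠ ∞ →
          P.restrict A = P A • P[|A] := by
        intro P hP0 hPT
        rw [ProbabilityTheory.cond, smul_smul, ENNReal.mul_inv_cancel hP0 hPT, one_smul]
      have hmap0 : Measure.map (B n) (P0.restrict A) = P0 A • ν0 := by
        rw [hrest P0 h0 haT, Measure.map_smul]
      have hmap1 : Measure.map (B n) (P1.restrict A) = P1 A • ν1 := by
        rw [hrest P1 hb1 hb1T, Measure.map_smul]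
      -- ν0 is absolutely continuous w.r.t. the unconditional pushforward
      have hν0_ac : ν0 ≪ Measure.map (B n) P0 := by
        intro s hs
        have hle : Measure.map (B n) (P0.restrict A) s ≤ Measure.map (B n) P0 s :=
          Measure.le_iff'.mp (Measure.map_mono Measure.restrict_le_self (hBmeas n)) s
        rw [hs] at hle
        have hz : Measure.map (B n) (P0.restrict A) s = 0 := le_antisymm hle zero_le
        rw [hν0_def, ProbabilityTheory.cond, Measure.map_smul, Measure.smul_apply, hz,
          smul_eq_mul, mul_zero]
      have hae : ∀ᵐ x ∂ν0, P1 A / P0 A * r x = c * x :=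
        (hfix n h0).filter_mono hν0_ac.ae_le
      have hae' : (fun x => P1 A * r x) =ᵐ[ν0] (fun x => P0 A * (c * x)) := by
        filter_upwards [hae] with x hx
        rw [← hx, ← mul_assoc, ENNReal.mul_div_cancel h0 haT]
      calc Measure.map (B n) (P1.restrict A) = P1 A • ν1 := hmap1
        _ = ν0.withDensity (fun x => P1 A * r x) := by
            rw [hwd, ← withDensity_smul _ hr]; rfl
        _ = ν0.withDensity (fun x => P0 A * (c * x)) := withDensity_congr_ae hae'
        _ = P0 A • ν0.withDensity (fun x => c * x) :=
            withDensity_smul _ (measurable_const.mul measurable_id)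
        _ = (Measure.map (B n) (P0.restrict A)).withDensity (fun x => c * x) := by
            rw [hmap0, withDensity_smul_measure]
  -- assemble
  have hmain : Measure.map f P1 = (Measure.map f P0).withDensity (fun x => c * x) := by
    rw [← hsum P1, ← hsum P0, withDensity_sum]
    congr 1
    funext n
    exact key n
  haveI : IsProbabilityMeasure (Measure.map f P0) :=
    Measure.isProbabilityMeasure_map hf.aemeasurable
  rw [hmain]
  exact Measure.rnDeriv_withDensity _ (measurable_const.mul measurable_id)
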